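/- (Corollary 3.3) Let I be a finite nonempty itemset, R, M : I → ℝ score functions, P = softmax(R) and Q = softmax(M) the corresponding softmax distributions on I. Let (o_k)_{k≥1} be i.i.d. with law Q. For each L define the vector Δ^L ∈ ℝ^L with entries Δ^L_j = R(o_j) - M(o_j), j = 1,…,L. Then almost surely, log L - H(softmax(Δ^L)) converges as L → ∞ to the KL divergence ∑_{i∈I} P(i) log(P(i)/Q(i)), where H(p) = -∑_j p_j log p_j is the Shannon entropy and softmax(Δ)_j = exp(Δ_j)/∑_k exp(Δ_k). -/

import Mathlib

open scoped BigOperators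
open MeasureTheory ProbabilityTheory Filter

/-- Strong law of large numbers for `g ∘ o k` where the `o k` are i.i.d. with the
softmax law of `M`. -/
lemma slln_softmax_aux {I : Type*} [Fintype I] [Nonempty I]
    [MeasurableSpace I] [MeasurableSingletonClass I]
    {Ω : Type*} [MeasurableSpace Ω] (μ : Measure Ω) [IsProbabilityMeasure μ]
    (M : I → ℝ)
    (o : ℕ → Ω → I) (homeas : ∀ k, Measurable (o k))
    (hindep : iIndepFun o μ)
    (hlaw : ∀ k i, μ (o k ⁻¹' {i}) =
      ENNReal.ofReal (Real.exp (M i) / ∑ j, Real.exp (M j)))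
    (g : I → ℝ) :
    ∀ᵐ ω ∂μ, Tendsto (fun L : ℕ => (∑ j ∈ Finset.range L, g (o j ω)) / L) atTop
      (nhds (∑ i, (Real.exp (M i) / ∑ j, Real.exp (M j)) * g i)) := by
  have hg : Measurable g := measurable_of_countable g
  have hmap : ∀ k, Measure.map (o k) μ = Measure.map (o 0) μ := by
    intro k
    refine Measure.ext_of_singleton fun i => ?_
    rw [Measure.map_apply (homeas k) (measurableSet_singleton i),
      Measure.map_apply (homeas 0) (measurableSet_singleton i), hlaw, hlaw]
  have hprob : IsProbabilityMeasure (Measure.map (o 0) μ) :=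
    Measure.isProbabilityMeasure_map (homeas 0).aemeasurable
  have hint : Integrable (fun ω => g (o 0 ω)) μ := by
    exact (integrable_map_measure hg.aestronglyMeasurable
      (homeas 0).aemeasurable).mp Integrable.of_finite
  have hident : ∀ k, IdentDistrib (fun ω => g (o k ω)) (fun ω => g (o 0 ω)) μ μ := by
    intro k
    exact IdentDistrib.comp ⟨(homeas k).aemeasurable, (homeas 0).aemeasurable, hmap k⟩ hg
  have hpind : Pairwise (Function.onFun (IndepFun · · μ) fun k ω => g (o k ω)) := by
    intro i j hij
    exact (hindep.indepFun hij).comp hg hg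
  have hE : (∫ ω, g (o 0 ω) ∂μ) = ∑ i, (Real.exp (M i) / ∑ j, Real.exp (M j)) * g i := by
    rw [← integral_map (homeas 0).aemeasurable hg.aestronglyMeasurable,
      integral_fintype _]
    refine Finset.sum_congr rfl fun i _ => ?_
    rw [Measure.real, Measure.map_apply (homeas 0) (measurableSet_singleton i), hlaw,
      ENNReal.toReal_ofReal
        (div_nonneg (Real.exp_pos _).le (Finset.sum_nonneg fun _ _ => (Real.exp_pos _).le))]
    rfl
    exact Integrable.of_finite
  have := strong_law_ae_real (fun k ω => g (o k ω)) hint hpind hident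
  rw [hE] at this
  exact this

/-- Corollary 3.3: if the samples `o₁, o₂, …` are drawn i.i.d. exactly from the
retriever's softmax distribution `Q = softmax M`, then, writing
`Δ^L_j = R (o j) - M (o j)` for `j < L`, the quantity `log L - H(softmax Δ^L)`
converges almost surely to `D_KL(P ‖ Q)` with `P = softmax R`. -/
theorem logL_sub_entropy_tendsto_KL {I : Type*} [Fintype I] [Nonempty I]
    [MeasurableSpace I] [MeasurableSingletonClass I]
    {Ω : Type*} [MeasurableSpace Ω] (μ : Measure Ω) [IsProbabilityMeasure μ]
    (R M : I → ℝ)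
    (o : ℕ → Ω → I) (homeas : ∀ k, Measurable (o k))
    (hindep : iIndepFun o μ)
    (hlaw : ∀ k i, μ (o k ⁻¹' {i}) =
      ENNReal.ofReal (Real.exp (M i) / ∑ j, Real.exp (M j))) :
    ∀ᵐ ω ∂μ, Tendsto
      (fun L : ℕ =>
        Real.log L -
          (-(∑ j ∈ Finset.range L,
              (Real.exp (R (o j ω) - M (o j ω)) /
                  ∑ k ∈ Finset.range L, Real.exp (R (o k ω) - M (o k ω))) *
                Real.log
                  (Real.exp (R (o j ω) - M (o j ω)) /
                    ∑ k ∈ Finset.range L, Real.exp (R (o k ω) - M (o k ω))))))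
      atTop
      (nhds (∑ i,
        (Real.exp (R i) / ∑ j, Real.exp (R j)) *
          Real.log ((Real.exp (R i) / ∑ j, Real.exp (R j)) /
            (Real.exp (M i) / ∑ j, Real.exp (M j))))) := by
  set Zm : ℝ := ∑ j, Real.exp (M j) with hZm
  set Zr : ℝ := ∑ j, Real.exp (R j) with hZr
  have hZm_pos : 0 < Zm := Finset.sum_pos (fun _ _ => Real.exp_pos _) Finset.univ_nonempty
  have hZr_pos : 0 < Zr := Finset.sum_pos (fun _ _ => Real.exp_pos _) Finset.univ_nonempty
  have hA := slln_softmax_aux μ M o homeas hindep hlaw (fun i => Real.exp (R i - M i))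
  have hB := slln_softmax_aux μ M o homeas hindep hlaw
    (fun i => Real.exp (R i - M i) * (R i - M i))
  set a : ℝ := ∑ i, (Real.exp (M i) / Zm) * Real.exp (R i - M i) with haa
  set b : ℝ := ∑ i, (Real.exp (M i) / Zm) * (Real.exp (R i - M i) * (R i - M i)) with hbb
  have ha_pos : 0 < a :=
    Finset.sum_pos (fun i _ => mul_pos (div_pos (Real.exp_pos _) hZm_pos) (Real.exp_pos _))
      Finset.univ_nonempty
  -- value of the limit
  have ha' : a = Zr / Zm := by
    rw [haa, hZr, Finset.sum_div]
    refine Finset.sum_congr rfl fun i _ => ?_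
    rw [Real.exp_sub]
    field_simp
  have hb' : b = (∑ i, Real.exp (R i) * (R i - M i)) / Zm := by
    rw [hbb, Finset.sum_div]
    refine Finset.sum_congr rfl fun i _ => ?_
    rw [Real.exp_sub]
    field_simp
  have hPsum : (∑ i, Real.exp (R i) / Zr) = 1 := by
    rw [← Finset.sum_div, ← hZr, div_self hZr_pos.ne']
  have hba : b / a = ∑ i, (Real.exp (R i) / Zr) * (R i - M i) := by
    have h1 : b / a = (∑ i, Real.exp (R i) * (R i - M i)) / Zr := by
      rw [hb', ha']
      field_simp
    rw [h1, Finset.sum_div]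
    exact Finset.sum_congr rfl fun i _ => by ring
  have key : -Real.log a + b / a =
      ∑ i, (Real.exp (R i) / Zr) *
        Real.log ((Real.exp (R i) / Zr) / (Real.exp (M i) / Zm)) := by
    have hterm : ∀ i ∈ Finset.univ (α := I),
        (Real.exp (R i) / Zr) * Real.log ((Real.exp (R i) / Zr) / (Real.exp (M i) / Zm))
        = (Real.exp (R i) / Zr) * (R i - M i)
          + (Real.exp (R i) / Zr) * (Real.log Zm - Real.log Zr) := by
      intro i _
      rw [Real.log_div (div_pos (Real.exp_pos _) hZr_pos).ne'
          (div_pos (Real.exp_pos _) hZm_pos).ne',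
        Real.log_div (Real.exp_ne_zero _) hZr_pos.ne',
        Real.log_div (Real.exp_ne_zero _) hZm_pos.ne',
        Real.log_exp, Real.log_exp]
      ring
    rw [Finset.sum_congr rfl hterm, Finset.sum_add_distrib, ← Finset.sum_mul, hPsum, one_mul,
      hba, ha', Real.log_div hZr_pos.ne' hZm_pos.ne']
    ring
  filter_upwards [hA, hB] with ω hAω hBω
  have hF : Tendsto (fun L : ℕ =>
      -Real.log ((∑ j ∈ Finset.range L, Real.exp (R (o j ω) - M (o j ω))) / L)
        + ((∑ j ∈ Finset.range L, Real.exp (R (o j ω) - M (o j ω)) * (R (o j ω) - M (o j ω))) / L)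
          / ((∑ j ∈ Finset.range L, Real.exp (R (o j ω) - M (o j ω))) / L))
      atTop (nhds (-Real.log a + b / a)) :=
    ((hAω.log ha_pos.ne').neg).add (hBω.div hAω ha_pos.ne')
  rw [← key]
  refine hF.congr' ?_
  filter_upwards [eventually_ge_atTop 1] with L hL
  have hL0 : (0 : ℝ) < L := by exact_mod_cast hL
  set S : ℝ := ∑ k ∈ Finset.range L, Real.exp (R (o k ω) - M (o k ω)) with hSdef
  have hS_pos : 0 < S :=
    Finset.sum_pos (fun _ _ => Real.exp_pos _) (Finset.nonempty_range_iff.mpr (by omega))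
  set T : ℝ := ∑ j ∈ Finset.range L,
    Real.exp (R (o j ω) - M (o j ω)) * (R (o j ω) - M (o j ω)) with hTdef
  have hsum : ∑ j ∈ Finset.range L,
      (Real.exp (R (o j ω) - M (o j ω)) / S) * Real.log (Real.exp (R (o j ω) - M (o j ω)) / S)
      = T / S - Real.log S := by
    have hterm : ∀ j ∈ Finset.range L,
        (Real.exp (R (o j ω) - M (o j ω)) / S) * Real.log (Real.exp (R (o j ω) - M (o j ω)) / S)
        = (Real.exp (R (o j ω) - M (o j ω)) * (R (o j ω) - M (o j ω))) / S
          - (Real.exp (R (o j ω) - M (o j ω)) / S) * Real.log S := by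
      intro j _
      rw [Real.log_div (Real.exp_ne_zero _) hS_pos.ne', Real.log_exp]
      ring
    rw [Finset.sum_congr rfl hterm, Finset.sum_sub_distrib, ← Finset.sum_div, ← hTdef,
      ← Finset.sum_mul, ← Finset.sum_div, ← hSdef, div_self hS_pos.ne', one_mul]
  have hTL : (T / (L : ℝ)) / (S / L) = T / S := by
    field_simp
  rw [hsum, hTL, Real.log_div hS_pos.ne' hL0.ne']
  ring
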